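/- There exist integers a, b such that the trajectory x : ℕ → ℤ with x 0 = a, x 1 = b of the rule x(n+2) = (x n − x(n+1))/2 if x n + x(n+1) is even and x(n+2) = x n − x(n+1) if x n + x(n+1) is odd, is unbounded: for every M ∈ ℤ there exists n with |x n| > M. -/

import Mathlib

private def uu : ℕ → ℤ
  | 0 => 1
  | 1 => 2
  | (n + 2) => if Even (uu n + uu (n + 1)) then (uu n + uu (n + 1)) / 2
               else uu n + uu (n + 1)

private lemma uu_even {n : ℕ} (h : Even (uu n + uu (n + 1))) :
    uu (n + 2) = (uu n + uu (n + 1)) / 2 := by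
  rw [uu]; simp [h]

private lemma uu_odd {n : ℕ} (h : ¬ Even (uu n + uu (n + 1))) :
    uu (n + 2) = uu n + uu (n + 1) := by
  rw [uu]; simp [h]

private lemma uu_pos : ∀ n, 0 < uu n ∧ 0 < uu (n + 1) := by
  intro n
  induction n with
  | zero => exact ⟨by norm_num [uu], by norm_num [uu]⟩
  | succ m ih =>
    refine ⟨ih.2, ?_⟩
    by_cases h : Even (uu m + uu (m + 1))
    · rw [uu_even h]
      obtain ⟨k, hk⟩ := h
      have h1 := ih.1; have h2 := ih.2
      omega
    · rw [uu_odd h]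
      have h1 := ih.1; have h2 := ih.2
      omega

/-- d n = uu (n+1) - uu n is never zero. -/
private lemma uu_d_even {n : ℕ} (h : Even (uu n + uu (n + 1))) :
    uu (n + 1) - uu n = -2 * (uu (n + 2) - uu (n + 1)) := by
  have := uu_even h
  obtain ⟨k, hk⟩ := h
  omega

private lemma uu_d_ne : ∀ n, uu (n + 1) - uu n ≠ 0 := by
  intro n
  induction n with
  | zero => norm_num [uu]
  | succ m ih =>
    simp only [show m + 1 + 1 = m + 2 from rfl]
    by_cases h : Even (uu m + uu (m + 1))
    · have := uu_d_even h
      omega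
    · have := uu_odd h
      have := (uu_pos m).1
      omega

private lemma uu_oddstep (n : ℕ) : ∃ m, n ≤ m ∧ ¬ Even (uu m + uu (m + 1)) := by
  by_contra hc
  push_neg at hc
  have key : ∀ k : ℕ, |uu (n + 1) - uu n| = 2 ^ k * |uu (n + k + 1) - uu (n + k)| := by
    intro k
    induction k with
    | zero => simp
    | succ j ihj =>
      have he : Even (uu (n + j) + uu (n + j + 1)) := hc (n + j) (Nat.le_add_right n j)
      have hd := uu_d_even he
      rw [ihj]
      have : |uu (n + j + 1) - uu (n + j)| = 2 * |uu (n + j + 1 + 1) - uu (n + j + 1)| := by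
        rw [hd]
        rw [abs_mul]
        norm_num
      rw [show n + (j + 1) + 1 = n + j + 1 + 1 from rfl,
        show n + (j + 1) = n + j + 1 from rfl, this]
      ring
  set D := |uu (n + 1) - uu n| with hD
  have hDpos : 0 < D := abs_pos.mpr (uu_d_ne n)
  have hk := key D.toNat
  have hge : (1 : ℤ) ≤ |uu (n + D.toNat + 1) - uu (n + D.toNat)| := by
    have := abs_pos.mpr (uu_d_ne (n + D.toNat))
    omega
  have h2 : (2 : ℤ) ^ D.toNat ≤ D := by
    calc (2:ℤ) ^ D.toNat = 2 ^ D.toNat * 1 := by ring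
    _ ≤ 2 ^ D.toNat * |uu (n + D.toNat + 1) - uu (n + D.toNat)| := by
        apply mul_le_mul_of_nonneg_left hge (by positivity)
    _ = D := hk.symm
  have hlt : D < 2 ^ D.toNat := by
    have : (D.toNat : ℤ) < 2 ^ D.toNat := by
      exact_mod_cast Nat.lt_two_pow_self (n := D.toNat)
    omega
  omega

/-- S n = uu n + 2 * uu (n+1). -/
private lemma uu_S_mono (n : ℕ) :
    uu n + 2 * uu (n + 1) ≤ uu (n + 1) + 2 * uu (n + 2) := by
  by_cases h : Even (uu n + uu (n + 1))
  · have := uu_even h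
    obtain ⟨k, hk⟩ := h
    omega
  · have := uu_odd h
    have := (uu_pos n).1
    have := (uu_pos n).2
    omega

private lemma uu_S_mono' : ∀ {a b : ℕ}, a ≤ b →
    uu a + 2 * uu (a + 1) ≤ uu b + 2 * uu (b + 1) := by
  intro a b hab
  induction b with
  | zero => simp_all
  | succ m ih =>
    rcases Nat.lt_or_ge a (m + 1) with h | h
    · exact le_trans (ih (Nat.lt_succ_iff.mp h)) (uu_S_mono m)
    · have : a = m + 1 := le_antisymm hab h
      subst this; rfl

private lemma uu_S_unbounded : ∀ k : ℕ, ∃ n, 5 + (k : ℤ) ≤ uu n + 2 * uu (n + 1) := by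
  intro k
  induction k with
  | zero => exact ⟨0, by norm_num [uu]⟩
  | succ j ih =>
    obtain ⟨n, hn⟩ := ih
    obtain ⟨m, hm, hodd⟩ := uu_oddstep n
    have h1 : uu n + 2 * uu (n + 1) ≤ uu m + 2 * uu (m + 1) := uu_S_mono' hm
    have h2 := uu_odd hodd
    have h3 := (uu_pos m).1
    have h4 := (uu_pos m).2
    refine ⟨m + 1, ?_⟩
    simp only [show m + 1 + 1 = m + 2 from rfl]
    push_cast
    omega

theorem exists_unbounded_trajectory_1m11m1 :
    ∃ a b : ℤ, ∃ x : ℕ → ℤ, x 0 = a ∧ x 1 = b ∧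
      (∀ n : ℕ,
        (Even (x n + x (n + 1)) → x (n + 2) = (x n - x (n + 1)) / 2) ∧
        (Odd (x n + x (n + 1)) → x (n + 2) = x n - x (n + 1))) ∧
      (∀ M : ℤ, ∃ n : ℕ, M < |x n|) := by
  refine ⟨1, -2, fun n => (-1) ^ n * uu n, by norm_num [uu], by norm_num [uu], ?_, ?_⟩
  · intro n
    have hsub : ((-1:ℤ)) ^ n * uu n - (-1) ^ (n + 1) * uu (n + 1)
        = (-1) ^ n * (uu n + uu (n + 1)) := by ring
    have hadd : ((-1:ℤ)) ^ n * uu n + (-1) ^ (n + 1) * uu (n + 1)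
        = (-1) ^ n * (uu n - uu (n + 1)) := by ring
    have hpar : Even ((-1:ℤ) ^ n * uu n + (-1) ^ (n + 1) * uu (n + 1)) ↔
        Even (uu n + uu (n + 1)) := by
      rw [hadd, Int.even_mul]
      have hodd1 : ¬ Even ((-1:ℤ) ^ n) := by
        simp [Int.even_pow, parity_simps]
      constructor
      · rintro (h | h)
        · exact absurd h hodd1
        · rw [Int.even_sub] at h; rw [Int.even_add]; tauto
      · intro h
        right
        rw [Int.even_add] at h; rw [Int.even_sub]; tauto
    have hp2 : ((-1 : ℤ)) ^ (n + 2) = (-1) ^ n := by ring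
    constructor
    · intro he
      have heu : Even (uu n + uu (n + 1)) := hpar.mp he
      obtain ⟨k, hk⟩ := heu
      have h2 : uu (n + 2) = k := by
        have := uu_even ⟨k, hk⟩; omega
      show ((-1 : ℤ)) ^ (n + 2) * uu (n + 2)
          = ((-1) ^ n * uu n - (-1) ^ (n + 1) * uu (n + 1)) / 2
      rw [hsub, hp2, h2, show uu n + uu (n + 1) = 2 * k by omega,
        Int.mul_ediv_assoc _ ⟨k, rfl⟩, Int.mul_ediv_cancel_left k two_ne_zero]
    · intro ho
      have hou : ¬ Even (uu n + uu (n + 1)) := by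
        rw [← hpar]; exact (Int.not_even_iff_odd).mpr ho
      show ((-1 : ℤ)) ^ (n + 2) * uu (n + 2)
          = (-1) ^ n * uu n - (-1) ^ (n + 1) * uu (n + 1)
      rw [hsub, hp2, uu_odd hou]
  · intro M
    obtain ⟨n, hn⟩ := uu_S_unbounded (3 * M).toNat
    have h1 := (uu_pos n).1
    have h2 := (uu_pos n).2
    have habs : ∀ m : ℕ, |(-1:ℤ) ^ m * uu m| = uu m := by
      intro m
      rw [abs_mul, abs_pow, abs_neg, abs_one, one_pow, one_mul,
        abs_of_pos (uu_pos m).1]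
    have hu0 : uu 0 = 1 := by norm_num [uu]
    rcases le_or_gt M 0 with hM | hM
    · exact ⟨0, by rw [habs 0]; omega⟩
    · have h3 : 3 * M < uu n + 2 * uu (n + 1) := by omega
      rcases lt_or_ge M (uu n) with h | h
      · exact ⟨n, by rw [habs n]; omega⟩
      · exact ⟨n + 1, by rw [habs (n + 1)]; omega⟩
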